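/- Let B = [Aᵀ, wC]ᵀ be the (n+k)×d vertical concatenation of A and w·Cᵀ (with C ∈ ℝ^{d×k}). Then the distance to the best rank-2k approximation of B·Bᵀ in Frobenius norm is at most ‖A·Aᵀ‖_F: that is, ‖BBᵀ − (BBᵀ)_{2k}‖_F ≤ ‖AAᵀ‖_F. -/

import Mathlib

open Matrix BigOperators

noncomputable def frob {m n : Type*} [Fintype m] [Fintype n] (M : Matrix m n ℝ) : ℝ :=
  Real.sqrt (∑ i, ∑ j, (M i j) ^ 2)

def IsBestRank {ι : Type*} [Fintype ι] [DecidableEq ι] (r : ℕ) (M Mr : Matrix ι ι ℝ) : Prop :=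
  Mr.rank ≤ r ∧ ∀ L : Matrix ι ι ℝ, L.rank ≤ r → frob (M - Mr) ≤ frob (M - L)

lemma matrix_rank_add_le {ι : Type*} [Fintype ι] [DecidableEq ι]
    (A B : Matrix ι ι ℝ) : (A + B).rank ≤ A.rank + B.rank := by
  unfold Matrix.rank
  rw [Matrix.mulVecLin_add]
  calc Module.finrank ℝ (LinearMap.range (A.mulVecLin + B.mulVecLin))
      ≤ Module.finrank ℝ ↥(LinearMap.range A.mulVecLin ⊔ LinearMap.range B.mulVecLin) := by
        apply Submodule.finrank_mono
        rintro x ⟨v, rfl⟩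
        exact Submodule.add_mem_sup ⟨v, rfl⟩ ⟨v, rfl⟩
    _ ≤ _ := Submodule.finrank_add_le_finrank_add_finrank _ _

theorem stmt1 (n d k : ℕ) (A : Matrix (Fin n) (Fin d) ℝ) (C : Matrix (Fin d) (Fin k) ℝ)
    (w : ℝ) (B : Matrix (Fin n ⊕ Fin k) (Fin d) ℝ)
    (hB : B = Matrix.fromRows A (w • Cᵀ))
    (K2k : Matrix (Fin n ⊕ Fin k) (Fin n ⊕ Fin k) ℝ)
    (hK2k : IsBestRank (2 * k) (B * Bᵀ) K2k) :
    frob (B * Bᵀ - K2k) ≤ frob (A * Aᵀ) := by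
  set X : Matrix (Fin n) (Fin k) ℝ := A * (w • Cᵀ)ᵀ with hX
  set Y : Matrix (Fin k) (Fin n) ℝ := (w • Cᵀ) * Aᵀ with hY
  set Z : Matrix (Fin k) (Fin k) ℝ := (w • Cᵀ) * (w • Cᵀ)ᵀ with hZ
  set L : Matrix (Fin n ⊕ Fin k) (Fin n ⊕ Fin k) ℝ := fromBlocks 0 X Y Z with hL
  have hBB : B * Bᵀ = fromBlocks (A * Aᵀ) X Y Z := by
    rw [hB, Matrix.transpose_fromRows, Matrix.fromRows_mul_fromCols]
  have hrank : L.rank ≤ 2 * k := by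
    have h1 : L = fromRows (0 : Matrix (Fin n) (Fin n ⊕ Fin k) ℝ) (fromCols Y 0) +
        fromCols (0 : Matrix (Fin n ⊕ Fin k) (Fin n) ℝ) (fromRows X Z) := by
      ext (i | i) (j | j) <;> simp [hL, Matrix.fromBlocks]
    have h2 : (fromRows (0 : Matrix (Fin n) (Fin n ⊕ Fin k) ℝ) (fromCols Y 0)).rank ≤ k := by
      have : fromRows (0 : Matrix (Fin n) (Fin n ⊕ Fin k) ℝ) (fromCols Y 0) =
          fromRows (0 : Matrix (Fin n) (Fin k) ℝ) (1 : Matrix (Fin k) (Fin k) ℝ) *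
            fromCols Y 0 := by
        rw [Matrix.fromRows_mul]
        simp
      rw [this]
      calc _ ≤ (fromCols Y (0 : Matrix (Fin k) (Fin k) ℝ)).rank :=
              Matrix.rank_mul_le_right _ _
        _ ≤ Fintype.card (Fin k) := Matrix.rank_le_card_height _
        _ = k := Fintype.card_fin k
    have h3 : (fromCols (0 : Matrix (Fin n ⊕ Fin k) (Fin n) ℝ) (fromRows X Z)).rank ≤ k := by
      have : fromCols (0 : Matrix (Fin n ⊕ Fin k) (Fin n) ℝ) (fromRows X Z) =
          fromRows X Z * fromCols (0 : Matrix (Fin k) (Fin n) ℝ) 1 := by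
        rw [Matrix.mul_fromCols]
        simp
      rw [this]
      calc _ ≤ (fromRows X Z).rank := Matrix.rank_mul_le_left _ _
        _ ≤ Fintype.card (Fin k) := Matrix.rank_le_card_width _
        _ = k := Fintype.card_fin k
    calc L.rank ≤ _ + _ := h1 ▸ matrix_rank_add_le _ _
      _ ≤ k + k := Nat.add_le_add h2 h3
      _ = 2 * k := (Nat.two_mul k).symm
  have hdiff : B * Bᵀ - L = fromBlocks (A * Aᵀ) 0 0 0 := by
    rw [hBB, hL]
    ext (i | i) (j | j) <;> simp [Matrix.fromBlocks]
  have hfrob : frob (B * Bᵀ - L) = frob (A * Aᵀ) := by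
    rw [hdiff]
    unfold frob
    congr 1
    rw [Fintype.sum_sum_type]
    simp [Fintype.sum_sum_type, Matrix.fromBlocks]
  calc frob (B * Bᵀ - K2k) ≤ frob (B * Bᵀ - L) := hK2k.2 L hrank
    _ = frob (A * Aᵀ) := hfrob
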